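/- Let b : ℤ^N → ℤ^r be a surjective group homomorphism with kernel L, given by an N × (N−r) matrix M of generators of L as above. For a subset I = {i₁ < ⋯ < i_r} ⊆ {1,…,N}, the absolute value of the determinant of the r × r matrix whose columns are b(e_{i₁}), …, b(e_{i_r}) equals the absolute value of the (N−r) × (N−r) minor of M obtained by deleting the rows indexed by I. In particular, when this determinant is nonzero, the index in ℤ^r of the subgroup generated by b(e_{i₁}),…,b(e_{i_r}) equals the absolute value of the complementary minor of M. -/

import Mathlib

open Matrix

open Matrix

/-- Key determinantal identity. -/
lemma aux_det {N r : ℕ}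
    (b : (Fin N → ℤ) →ₗ[ℤ] (Fin r → ℤ)) (hb : Function.Surjective b)
    (M : Matrix (Fin N) (Fin (N - r)) ℤ)
    (hker : ∀ x : Fin N → ℤ, b x = 0 → ∃ u, M *ᵥ u = x)
    (c : Fin (N - r) → Fin N) (s : Fin r → Fin N)
    (hbij : Function.Bijective (Sum.elim c s)) :
    (Matrix.det (Matrix.of fun i j : Fin r => b (Pi.single (s j) 1) i)).natAbs
      = (Matrix.det (M.submatrix c id)).natAbs := by
  classical
  set D : Matrix (Fin r) (Fin r) ℤ := Matrix.of (fun i j => b (Pi.single (s j) 1) i) with hD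
  set Smat : Matrix (Fin N) (Fin r) ℤ :=
    Matrix.of (fun i k => (hb (Pi.single k 1)).choose i) with hSmat
  have hbS : ∀ v : Fin r → ℤ, b (Smat *ᵥ v) = v := by
    intro v
    have h1 : Smat *ᵥ v = ∑ k, v k • (hb (Pi.single k 1)).choose := by
      ext i
      simp [Matrix.mulVec, dotProduct, hSmat, mul_comm]
    rw [h1, map_sum]
    have h2 : ∀ k, b (v k • (hb (Pi.single k 1)).choose) = v k • Pi.single k 1 := by
      intro k
      rw [_root_.map_smul, (hb (Pi.single k 1)).choose_spec]
    simp only [h2]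
    ext k
    simp [Finset.sum_apply, Pi.single_apply]
  have hw : ∀ j : Fin r, ∃ u, M *ᵥ u = Pi.single (s j) 1 - Smat *ᵥ (fun k => D k j) := by
    intro j
    apply hker
    have h3 : (fun k => D k j) = b (Pi.single (s j) 1) := rfl
    rw [map_sub, h3, hbS, sub_self]
  choose Rv hRv using hw
  set Rmat : Matrix (Fin (N - r)) (Fin r) ℤ := Matrix.of (fun i j => Rv j i) with hRmat
  set Ψ : Matrix (Fin N) (Fin (N - r) ⊕ Fin r) ℤ := fromCols M Smat with hΨ
  set E : Matrix (Fin N) (Fin r) ℤ := Matrix.of (fun i j => (Pi.single (s j) 1 : Fin N → ℤ) i) with hE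
  have hME : M * Rmat + Smat * D = E := by
    ext i j
    have h := congrFun (hRv j) i
    simp only [Matrix.mulVec, dotProduct, Pi.sub_apply] at h
    simp only [Matrix.add_apply, Matrix.mul_apply, hRmat, Matrix.of_apply, hE]
    rw [show ∑ l, M i l * Rv j l = (Pi.single (s j) 1 : Fin N → ℤ) i - ∑ k, Smat i k * D k j from h]
    ring
  have hfac : Ψ * fromBlocks 1 Rmat 0 D = fromCols M E := by
    rw [hΨ, fromCols_mul_fromBlocks, Matrix.mul_one, Matrix.mul_zero, add_zero, hME]
  have hinj := hbij.1
  have hsinj : Function.Injective s := by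
    intro a b hab
    have := hinj (a₁ := Sum.inr a) (a₂ := Sum.inr b) hab
    simpa using this
  have hcs : ∀ i j, c i ≠ s j := by
    intro i j h
    have := hinj (a₁ := Sum.inl i) (a₂ := Sum.inr j) h
    simp at this
  have hP : (fromCols M E).submatrix (Sum.elim c s) id
      = fromBlocks (M.submatrix c id) 0 (M.submatrix s id) 1 := by
    ext x y
    cases x with
    | inl i =>
      cases y with
      | inl j => rfl
      | inr j =>
        show E (c i) j = 0
        simp [hE, Pi.single_apply, hcs i j]
    | inr i =>
      cases y with
      | inl j => rfl
      | inr j =>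
        show E (s i) j = (1 : Matrix (Fin r) (Fin r) ℤ) i j
        simp [hE, Pi.single_apply, Matrix.one_apply, hsinj.eq_iff, eq_comm]
  have hdet1 : (M.submatrix c id).det = (Ψ.submatrix (Sum.elim c s) id).det * D.det := by
    calc (M.submatrix c id).det
        = (fromBlocks (M.submatrix c id) 0 (M.submatrix s id) 1).det := by
          rw [det_fromBlocks_zero₁₂, det_one, mul_one]
      _ = ((fromCols M E).submatrix (Sum.elim c s) id).det := by rw [hP]
      _ = ((Ψ * fromBlocks 1 Rmat 0 D).submatrix (Sum.elim c s) id).det := by rw [hfac]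
      _ = (Ψ.submatrix (Sum.elim c s) id * fromBlocks 1 Rmat 0 D).det := by
          rw [← Matrix.submatrix_mul_equiv Ψ (fromBlocks 1 Rmat 0 D)
            (Sum.elim c s) (Equiv.refl _) id]
          simp
      _ = _ := by rw [det_mul, det_fromBlocks_zero₂₁, det_one, one_mul]
  have hsurj : ∀ y : Fin N → ℤ, ∃ v, Ψ *ᵥ v = y := by
    intro y
    obtain ⟨u, hu⟩ := hker (y - Smat *ᵥ b y) (by rw [map_sub, hbS, sub_self])
    refine ⟨Sum.elim u (b y), ?_⟩
    rw [hΨ, fromCols_mulVec_sumElim, hu, sub_add_cancel]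
  have hsurj' : ∀ z : (Fin (N - r) ⊕ Fin r) → ℤ,
      ∃ v, (Ψ.submatrix (Sum.elim c s) id) *ᵥ v = z := by
    intro z
    obtain ⟨v, hv⟩ := hsurj (z ∘ (Equiv.ofBijective _ hbij).symm)
    refine ⟨v, ?_⟩
    ext x
    have h4 : ((Ψ.submatrix (Sum.elim c s) id) *ᵥ v) x = (Ψ *ᵥ v) (Sum.elim c s x) := rfl
    rw [h4, hv]
    exact congrArg z ((Equiv.ofBijective _ hbij).symm_apply_apply x)
  choose V hV using fun x => hsurj' (Pi.single x 1)
  set B2 : Matrix (Fin (N - r) ⊕ Fin r) (Fin (N - r) ⊕ Fin r) ℤ :=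
    Matrix.of (fun y x => V x y) with hB2
  have hright : Ψ.submatrix (Sum.elim c s) id * B2 = 1 := by
    ext i k
    calc (Ψ.submatrix (Sum.elim c s) id * B2) i k
        = ∑ j, Ψ.submatrix (Sum.elim c s) id i j * V k j := by
          simp [Matrix.mul_apply, hB2]
      _ = (Pi.single k 1 : (Fin (N - r) ⊕ Fin r) → ℤ) i := by
          have := congrFun (hV k) i
          simpa [Matrix.mulVec, dotProduct] using this
      _ = (1 : Matrix (Fin (N - r) ⊕ Fin r) (Fin (N - r) ⊕ Fin r) ℤ) i k := by
          simp [Matrix.one_apply, Pi.single_apply]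
  have hunit : IsUnit (Ψ.submatrix (Sum.elim c s) id).det := by
    apply IsUnit.of_mul_eq_one B2.det
    rw [← det_mul, hright, det_one]
  have h1 : (Ψ.submatrix (Sum.elim c s) id).det.natAbs = 1 := by
    rcases Int.isUnit_iff.mp hunit with h | h <;> simp [h]
  show D.det.natAbs = (M.submatrix c id).det.natAbs
  rw [hdet1, Int.natAbs_mul, h1, one_mul]

open Matrix

lemma aux_index {r : ℕ} (f : (Fin r → ℤ) →ₗ[ℤ] (Fin r → ℤ)) (hf : Function.Injective f) :
    (LinearMap.range f).toAddSubgroup.index = (LinearMap.det f).natAbs := by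
  classical
  obtain ⟨n, snf⟩ := (LinearMap.range f).smithNormalForm (Pi.basisFun ℤ (Fin r))
  have hn : n = r := by
    have e0 : (Fin r → ℤ) ≃ₗ[ℤ] LinearMap.range f := LinearEquiv.ofInjective f hf
    have h1 : Module.finrank ℤ (LinearMap.range f) = n := by
      rw [Module.finrank_eq_card_basis snf.bN, Fintype.card_fin]
    have h2 : Module.finrank ℤ (LinearMap.range f) = r := by
      rw [← e0.finrank_eq]
      simp
    omega
  subst n
  have hidx := snf.toAddSubgroup_index_eq_pow_mul_prod
  rw [Fintype.card_fin, Nat.sub_self, pow_zero, one_mul] at hidx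
  have hidx2 : (LinearMap.range f).toAddSubgroup.index = (∏ i, snf.a i).natAbs := by
    rw [hidx]
    rw [show (∏ i, snf.a i).natAbs = ∏ i, (snf.a i).natAbs from
      map_prod (⟨⟨Int.natAbs, rfl⟩, fun x y => Int.natAbs_mul x y⟩ : ℤ →* ℕ) _ _]
    exact Finset.prod_congr rfl fun i _ => by
      rw [Ideal.span_singleton_toAddSubgroup_eq_zmultiples, Int.index_zmultiples]
  set bb := Pi.basisFun ℤ (Fin r) with hbb
  set ℓ : (Fin r → ℤ) →ₗ[ℤ] (Fin r → ℤ) :=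
    (LinearMap.range f).subtype ∘ₗ (snf.bN.equivFun.symm : (Fin r → ℤ) ≃ₗ[ℤ] _) with hℓ
  have hassoc : Associated (LinearMap.det f) (LinearMap.det ℓ) := by
    have hf' : LinearMap.det f = LinearMap.det ((LinearMap.range f).subtype ∘ₗ
        ((LinearEquiv.ofInjective f hf : (Fin r → ℤ) ≃ₗ[ℤ] _) : (Fin r → ℤ) →ₗ[ℤ] _)) := by
      congr 1
    rw [hf', hℓ]
    exact LinearMap.associated_det_comp_equiv _ _ _
  have hM0 : LinearMap.toMatrix bb snf.bM ℓ
      = Matrix.of (fun i j => if i = snf.f j then snf.a j else 0) := by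
    ext i j
    rw [LinearMap.toMatrix_apply]
    have hℓj : ℓ (bb j) = ((snf.bN j : (Fin r → ℤ))) := by
      simp only [hℓ, LinearMap.comp_apply, LinearEquiv.coe_coe, Submodule.coe_subtype]
      congr 1
      rw [hbb]
      simp [Module.Basis.equivFun_symm_apply, Pi.basisFun_apply, Pi.single_apply]
    rw [hℓj, snf.snf j, _root_.map_smul, Module.Basis.repr_self]
    simp [Finsupp.single_apply, eq_comm]
  have hgbij : Function.Bijective snf.f := Finite.injective_iff_bijective.mp snf.f.injective
  set gE : Equiv.Perm (Fin r) := Equiv.ofBijective _ hgbij with hgE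
  have hsub : (LinearMap.toMatrix bb snf.bM ℓ).submatrix gE id = Matrix.diagonal snf.a := by
    ext i j
    rw [Matrix.submatrix_apply, hM0]
    have : (gE i : Fin r) = snf.f i := rfl
    by_cases h : i = j
    · subst h; simp [Matrix.diagonal_apply, this]
    · have hne : gE i ≠ snf.f j := by
        rw [this]; exact fun hh => h (hgbij.1 hh)
      simp [Matrix.diagonal_apply, h, hne]
  have h2 : (LinearMap.toMatrix bb snf.bM ℓ).det.natAbs = (∏ i, snf.a i).natAbs := by
    have hp := Matrix.det_permute gE (LinearMap.toMatrix bb snf.bM ℓ)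
    rw [show (LinearMap.toMatrix bb snf.bM ℓ).submatrix ⇑gE id = Matrix.diagonal snf.a
      from hsub, Matrix.det_diagonal] at hp
    have := congrArg Int.natAbs hp
    rw [Int.natAbs_mul] at this
    rcases Int.isUnit_iff.mp (Equiv.Perm.sign gE).isUnit with h | h <;>
      rw [h] at this <;> simpa using this.symm
  have hcomp : LinearMap.toMatrix bb bb ℓ
      = LinearMap.toMatrix snf.bM bb LinearMap.id * LinearMap.toMatrix bb snf.bM ℓ := by
    rw [← LinearMap.toMatrix_comp bb snf.bM bb, LinearMap.id_comp]
  have hunit : IsUnit (LinearMap.toMatrix snf.bM bb (LinearMap.id)).det := by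
    apply IsUnit.of_mul_eq_one (LinearMap.toMatrix bb snf.bM LinearMap.id).det
    rw [← det_mul, ← LinearMap.toMatrix_comp bb snf.bM bb, LinearMap.id_comp,
      LinearMap.toMatrix_id, det_one]
  have h1 : (LinearMap.toMatrix snf.bM bb LinearMap.id).det.natAbs = 1 := by
    rcases Int.isUnit_iff.mp hunit with h | h <;> rw [h] <;> rfl
  have hdetℓ : (LinearMap.det ℓ).natAbs = (∏ i, snf.a i).natAbs := by
    calc (LinearMap.det ℓ).natAbs = (LinearMap.toMatrix bb bb ℓ).det.natAbs := by
          rw [LinearMap.det_toMatrix]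
      _ = (∏ i, snf.a i).natAbs := by
          rw [hcomp, det_mul, Int.natAbs_mul, h1, one_mul, h2]
  rw [hidx2, ← hdetℓ, Int.natAbs_eq_iff_associated.mpr hassoc]


/-- Duality of minors: for a surjection `b : ℤ^N → ℤ^r` with kernel spanned by the
columns of `M`, and a choice `S` of `r` of the standard basis vectors, the absolute
value of `det (b e_{i₁}, …, b e_{i_r})` equals the absolute value of the complementary
`(N−r) × (N−r)` minor of `M`; when the determinant is nonzero, the index of the
subgroup generated by the `b e_i`, `i ∈ S`, equals this absolute value. -/
theorem minor_duality (N r : ℕ) (hr : r ≤ N)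
    (b : (Fin N → ℤ) →ₗ[ℤ] (Fin r → ℤ)) (hb : Function.Surjective b)
    (M : Matrix (Fin N) (Fin (N - r)) ℤ)
    (hindep : LinearIndependent ℤ (fun j : Fin (N - r) => (fun i => M i j : Fin N → ℤ)))
    (hspan : Submodule.span ℤ (Set.range (fun j : Fin (N - r) => (fun i => M i j : Fin N → ℤ)))
      = LinearMap.ker b)
    (S : Finset (Fin N)) (hS : S.card = r) (hc : Sᶜ.card = N - r) :
    (Matrix.det (fun i j : Fin r => b (Pi.single ((S.orderIsoOfFin hS j : Fin N)) 1) i)).natAbs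
      = (Matrix.det (M.submatrix (fun i : Fin (N - r) => ((Sᶜ.orderIsoOfFin hc i : Fin N))) id)).natAbs ∧
    ((Matrix.det (fun i j : Fin r => b (Pi.single ((S.orderIsoOfFin hS j : Fin N)) 1) i)) ≠ 0 →
      (AddSubgroup.closure
        (Set.range (fun j : Fin r => b (Pi.single ((S.orderIsoOfFin hS j : Fin N)) 1)))).index
        = (Matrix.det (M.submatrix (fun i : Fin (N - r) => ((Sᶜ.orderIsoOfFin hc i : Fin N))) id)).natAbs) := by
  classical
  let s : Fin r → Fin N := fun j => (S.orderIsoOfFin hS j : Fin N)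
  let c : Fin (N - r) → Fin N := fun i => (Sᶜ.orderIsoOfFin hc i : Fin N)
  have hbij : Function.Bijective (Sum.elim c s) := by
    rw [Fintype.bijective_iff_injective_and_card]
    constructor
    · rintro (i | i) (j | j) h <;> simp only [Sum.elim_inl, Sum.elim_inr] at h
      · have := (Sᶜ.orderIsoOfFin hc).injective (Subtype.ext h)
        rw [this]
      · exfalso
        have h1 : (c i) ∈ Sᶜ := (Sᶜ.orderIsoOfFin hc i).2
        have h2 : (s j) ∈ S := (S.orderIsoOfFin hS j).2
        rw [h] at h1
        exact (Finset.mem_compl.mp h1) h2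
      · exfalso
        have h1 : (c j) ∈ Sᶜ := (Sᶜ.orderIsoOfFin hc j).2
        have h2 : (s i) ∈ S := (S.orderIsoOfFin hS i).2
        rw [← h] at h1
        exact (Finset.mem_compl.mp h1) h2
      · have := (S.orderIsoOfFin hS).injective (Subtype.ext h)
        rw [this]
    · simp only [Fintype.card_sum, Fintype.card_fin]
      omega
  have hker : ∀ x : Fin N → ℤ, b x = 0 → ∃ u, M *ᵥ u = x := by
    intro x hx
    have hx' : x ∈ LinearMap.ker b := hx
    rw [← hspan] at hx'
    have hrange : (Set.range fun j : Fin (N - r) => (fun i => M i j : Fin N → ℤ))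
        = Set.range M.col := rfl
    rw [hrange, ← Matrix.range_mulVecLin] at hx'
    obtain ⟨u, hu⟩ := hx'
    exact ⟨u, hu⟩
  have hdet := aux_det b hb M hker c s hbij
  refine ⟨hdet, ?_⟩
  intro hne
  set Dm : Matrix (Fin r) (Fin r) ℤ := Matrix.of (fun i j => b (Pi.single (s j) 1) i) with hDm
  have hne' : Dm.det ≠ 0 := hne
  have hker0 : ∀ x, Dm.mulVecLin x = 0 → x = 0 := by
    intro x hx0
    have h5 : Dm.adjugate *ᵥ (Dm *ᵥ x) = Dm.det • x := by
      rw [Matrix.mulVec_mulVec, Matrix.adjugate_mul, Matrix.smul_mulVec,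
        Matrix.one_mulVec]
    rw [show Dm.mulVecLin x = Dm *ᵥ x from rfl] at hx0
    rw [hx0, Matrix.mulVec_zero] at h5
    rcases smul_eq_zero.mp h5.symm with h | h
    · exact absurd h hne'
    · exact h
  have hinj : Function.Injective Dm.mulVecLin := by
    intro x y hxy
    have h6 : Dm.mulVecLin (x - y) = 0 := by rw [map_sub, hxy, sub_self]
    exact sub_eq_zero.mp (hker0 _ h6)
  have hidx := aux_index Dm.mulVecLin hinj
  have hspan2 : AddSubgroup.closure (Set.range fun j : Fin r => b (Pi.single (s j) 1))
      = (LinearMap.range Dm.mulVecLin).toAddSubgroup := by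
    rw [Matrix.range_mulVecLin, ← Submodule.span_int_eq_addSubgroupClosure]
    rfl
  show (AddSubgroup.closure (Set.range fun j : Fin r => b (Pi.single (s j) 1))).index = _
  rw [hspan2, hidx, ← Matrix.toLin'_apply', LinearMap.det_toLin']
  exact hdet
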